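/- For the weight φ(z₁,z₂) = |z₁|⁴ + |z₁z₂|² on ℂ², the smallest eigenvalue s₁(z) of the complex Hessian M_φ(z) does not satisfy lim_{z→∞} |z|² s₁(z) = +∞; in fact s₁ vanishes identically on the set {z₁ = 0}, so |z|²s₁(z) = 0 along (0, z₂) with z₂ → ∞. -/

import Mathlib

open Filter Matrix

/-- The complex Hessian of `φ(z₁,z₂) = |z₁|⁴ + |z₁z₂|²`. -/
noncomputable def hessianPhi (z : ℂ × ℂ) : Matrix (Fin 2) (Fin 2) ℂ :=
  !![(4 * ‖z.1‖ ^ 2 + ‖z.2‖ ^ 2 : ℝ), (starRingEnd ℂ) z.1 * z.2;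
     z.1 * (starRingEnd ℂ) z.2, (‖z.1‖ ^ 2 : ℝ)]

/-- For `φ(z₁,z₂) = |z₁|⁴ + |z₁z₂|²`, the smallest eigenvalue `s₁` of the complex Hessian
vanishes identically on `{z₁ = 0}`; in particular `|z|² s₁(z)` does not tend to `+∞` as
`z → ∞`, i.e. Shigekawa's condition fails. -/
theorem shigekawa_condition_fails (s₁ : ℂ × ℂ → ℝ)
    (hmin : ∀ (z : ℂ × ℂ) (v : Fin 2 → ℂ),
      s₁ z * ∑ i, ‖v i‖ ^ 2 ≤ (star v ⬝ᵥ (hessianPhi z).mulVec v).re)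
    (heig : ∀ z : ℂ × ℂ, ∃ v : Fin 2 → ℂ, v ≠ 0 ∧
      (hessianPhi z).mulVec v = (s₁ z : ℂ) • v) :
    (∀ z₂ : ℂ, s₁ (0, z₂) = 0) ∧
      ¬ Tendsto (fun z : ℂ × ℂ => ‖z‖ ^ 2 * s₁ z) (cocompact (ℂ × ℂ)) atTop := by
  have hzero : ∀ z₂ : ℂ, s₁ (0, z₂) = 0 := by
    intro z₂
    -- s₁ ≤ 0 from the test vector (0,1)
    have hle : s₁ (0, z₂) ≤ 0 := by
      have := hmin (0, z₂) ![0, 1]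
      simpa [hessianPhi, dotProduct, mulVec, Fin.sum_univ_two] using this
    obtain ⟨v, hv, h⟩ := heig (0, z₂)
    have h1 := congrFun h 1
    have h0 := congrFun h 0
    simp [hessianPhi, mulVec, dotProduct, Fin.sum_univ_two] at h1 h0
    rcases h1 with h1 | h1
    · exact_mod_cast h1
    · rcases h0 with h0 | h0
      · -- s₁ = |z₂|² ≥ 0, combined with s₁ ≤ 0
        have : (‖z₂‖ ^ 2 : ℝ) = s₁ (0, z₂) := by exact_mod_cast h0
        nlinarith [sq_nonneg ‖z₂‖]
      · exact absurd (funext fun i => by fin_cases i <;> simp [h0, h1]) hv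
  refine ⟨hzero, fun hT => ?_⟩
  have hiso : Isometry (fun z₂ : ℂ => ((0 : ℂ), z₂)) := by
    intro a b
    simp [Prod.edist_eq]
  have hten : Tendsto (fun z₂ : ℂ => ((0 : ℂ), z₂)) (cocompact ℂ) (cocompact (ℂ × ℂ)) :=
    hiso.isClosedEmbedding.tendsto_cocompact
  have := hT.comp hten
  have h0 : (fun z₂ : ℂ => ‖((0 : ℂ), z₂)‖ ^ 2 * s₁ (0, z₂)) = fun _ => (0 : ℝ) := by
    funext z₂; rw [hzero]; ring
  rw [show ((fun z : ℂ × ℂ => ‖z‖ ^ 2 * s₁ z) ∘ fun z₂ : ℂ => ((0 : ℂ), z₂))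
      = fun _ => (0 : ℝ) from h0] at this
  exact absurd (this.eventually (eventually_gt_atTop 0)).exists (by simp)
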